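/- Let H be a real inner product space. For all a, b ∈ H one has ⟪(1 + ‖a‖²)·a − (1 + ‖b‖²)·b, a − b⟫ ≥ ‖a − b‖² + (1/2)(‖a‖² − ‖b‖²)² + (1/2)‖a‖²‖a − b‖². -/

import Mathlib

theorem strengthened_monotonicity {H : Type*} [NormedAddCommGroup H] [InnerProductSpace ℝ H]
    (a b : H) :
    (inner ℝ ((1 + ‖a‖ ^ 2) • a - (1 + ‖b‖ ^ 2) • b) (a - b) : ℝ) ≥
      ‖a - b‖ ^ 2 + (1 / 2) * (‖a‖ ^ 2 - ‖b‖ ^ 2) ^ 2 + (1 / 2) * ‖a‖ ^ 2 * ‖a - b‖ ^ 2 := by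
  have hab : ‖a - b‖ ^ 2 = ‖a‖ ^ 2 - 2 * inner ℝ a b + ‖b‖ ^ 2 := by
    exact norm_sub_sq_real a b
  have hL : (inner ℝ ((1 + ‖a‖ ^ 2) • a - (1 + ‖b‖ ^ 2) • b) (a - b) : ℝ) =
      (1 + ‖a‖ ^ 2) * ‖a‖ ^ 2 - (1 + ‖a‖ ^ 2) * inner ℝ a b
        - (1 + ‖b‖ ^ 2) * inner ℝ a b + (1 + ‖b‖ ^ 2) * ‖b‖ ^ 2 := by
    simp [inner_sub_left, inner_sub_right, real_inner_smul_left,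
      real_inner_self_eq_norm_sq, real_inner_comm b a]
    ring
  have hb : (0:ℝ) ≤ ‖b‖ ^ 2 := by positivity
  have hs : (0:ℝ) ≤ ‖a - b‖ ^ 2 := by positivity
  nlinarith [mul_nonneg hb hs]
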